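/- arXiv:2403.04448 — 2 statements merged into one kernel-verified Lean document; each statement's English description precedes it below -/
import Mathlib

section
/- With notation as in the joint array measurement update, assume S_e is invertible and define K = P̄_{xz}·S_e^{-1}. Then K equals the Kalman gain P_{xz} R_e^{-1} where P_{xz} = X̄ Z̄ᵀ and R_e = Z̄ Z̄ᵀ + R, and moreover S_P S_Pᵀ = X̄ X̄ᵀ − K R_e Kᵀ, i.e. S_P is a square root of the posterior covariance P_{k|k} = P_{k|k-1} − K R_e Kᵀ with P_{k|k-1} = X̄ X̄ᵀ. -/
open Matrix

/-- With the joint array measurement update `[[Z̄, R^{1/2}],[X̄, 0]]·Θ = [[Sₑ, 0],[P̄ₓᵤ, S_P]]`,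
`Θ` orthogonal, `R = R^{1/2}(R^{1/2})ᵀ`, and `Sₑ` invertible, the matrix
`K = P̄ₓᵤ·Sₑ⁻¹` equals the Kalman gain `Pₓᵤ Rₑ⁻¹` with `Pₓᵤ = X̄ Z̄ᵀ`, `Rₑ = Z̄ Z̄ᵀ + R`;
moreover `S_P S_Pᵀ = X̄ X̄ᵀ − K Rₑ Kᵀ`. -/
theorem stmt_8 (n m : ℕ)
    (Zbar : Matrix (Fin m) (Fin n) ℝ) (Xbar : Matrix (Fin n) (Fin n) ℝ)
    (Rsqrt : Matrix (Fin m) (Fin m) ℝ)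
    (Se : Matrix (Fin m) (Fin m) ℝ) (Pxzbar : Matrix (Fin n) (Fin m) ℝ)
    (SP : Matrix (Fin n) (Fin n) ℝ)
    (Θ : Matrix (Fin n ⊕ Fin m) (Fin m ⊕ Fin n) ℝ)
    (hΘ : Θ * Θᵀ = 1)
    (hpost : fromBlocks Zbar Rsqrt Xbar 0 * Θ = fromBlocks Se 0 Pxzbar SP)
    (hRpd : (Rsqrt * Rsqrtᵀ).PosDef)
    (hSe : IsUnit Se.det)
    (K : Matrix (Fin n) (Fin m) ℝ) (hK : K = Pxzbar * Se⁻¹) :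
    K = (Xbar * Zbarᵀ) * (Zbar * Zbarᵀ + Rsqrt * Rsqrtᵀ)⁻¹ ∧
    SP * SPᵀ = Xbar * Xbarᵀ - K * (Zbar * Zbarᵀ + Rsqrt * Rsqrtᵀ) * Kᵀ := by
  set A := fromBlocks Zbar Rsqrt Xbar 0 with hA
  set B := fromBlocks Se 0 Pxzbar SP with hB
  have key : A * Aᵀ = B * Bᵀ := by
    calc A * Aᵀ = A * (Θ * Θᵀ) * Aᵀ := by rw [hΘ, Matrix.mul_one]
    _ = (A * Θ) * (A * Θ)ᵀ := by
        rw [Matrix.transpose_mul]; simp only [Matrix.mul_assoc]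
    _ = B * Bᵀ := by rw [hpost]
  rw [hA, hB, fromBlocks_transpose, fromBlocks_transpose, fromBlocks_multiply,
    fromBlocks_multiply] at key
  have e11 : Zbar * Zbarᵀ + Rsqrt * Rsqrtᵀ = Se * Seᵀ := by
    have := congrArg Matrix.toBlocks₁₁ key
    simpa using this
  have e21 : Xbar * Zbarᵀ = Pxzbar * Seᵀ := by
    have := congrArg Matrix.toBlocks₂₁ key
    simpa using this
  have e22 : Xbar * Xbarᵀ = Pxzbar * Pxzbarᵀ + SP * SPᵀ := by
    have := congrArg Matrix.toBlocks₂₂ key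
    simpa using this
  have hSeT : IsUnit Seᵀ.det := by simpa [Matrix.det_transpose] using hSe
  have hSeinv : Se * Se⁻¹ = 1 := Matrix.mul_nonsing_inv Se hSe
  have hSeinv' : Se⁻¹ * Se = 1 := Matrix.nonsing_inv_mul Se hSe
  have hSeTinv : Seᵀ * Seᵀ⁻¹ = 1 := Matrix.mul_nonsing_inv Seᵀ hSeT
  have hRe : (Zbar * Zbarᵀ + Rsqrt * Rsqrtᵀ)⁻¹ = Seᵀ⁻¹ * Se⁻¹ := by
    rw [e11, Matrix.mul_inv_rev]
  constructor
  · rw [hK, hRe, e21]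
    rw [Matrix.mul_assoc, ← Matrix.mul_assoc Seᵀ, hSeTinv, Matrix.one_mul]
  · have hKRe : K * (Zbar * Zbarᵀ + Rsqrt * Rsqrtᵀ) * Kᵀ = Pxzbar * Pxzbarᵀ := by
      rw [hK, e11, Matrix.transpose_mul, Matrix.transpose_nonsing_inv]
      calc Pxzbar * Se⁻¹ * (Se * Seᵀ) * (Seᵀ⁻¹ * Pxzbarᵀ)
          = Pxzbar * ((Se⁻¹ * Se) * (Seᵀ * Seᵀ⁻¹)) * Pxzbarᵀ := by
            simp only [Matrix.mul_assoc]
        _ = Pxzbar * Pxzbarᵀ := by rw [hSeinv', hSeTinv, Matrix.one_mul, Matrix.mul_one]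
    rw [hKRe, e22]; abel
end

section
/- Let P ∈ ℝ^{n×n} be symmetric positive semidefinite and R_e ∈ ℝ^{m×m} symmetric positive definite, P_{xz} ∈ ℝ^{n×m}, K = P_{xz}R_e^{-1}. If P − K R_e Kᵀ arises as P = X̄X̄ᵀ with P_{xz} = X̄ Z̄ᵀ and R_e = Z̄Z̄ᵀ + R (R symmetric positive semidefinite), then P − K R_e Kᵀ is positive semidefinite. -/
open Matrix

/-- If `P = X̄ X̄ᵀ`, `Pₓᵤ = X̄ Z̄ᵀ`, `Rₑ = Z̄ Z̄ᵀ + R` with `R` symmetric positive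
semidefinite and `Rₑ` symmetric positive definite, and `K = Pₓᵤ Rₑ⁻¹`, then
`P − K Rₑ Kᵀ` is positive semidefinite. -/
theorem stmt_16 (n m : ℕ)
    (Xbar : Matrix (Fin n) (Fin n) ℝ) (Zbar : Matrix (Fin m) (Fin n) ℝ)
    (R : Matrix (Fin m) (Fin m) ℝ) (hR : R.PosSemidef)
    (Re : Matrix (Fin m) (Fin m) ℝ) (hRe : Re = Zbar * Zbarᵀ + R)
    (hRepd : Re.PosDef)
    (P : Matrix (Fin n) (Fin n) ℝ) (hP : P = Xbar * Xbarᵀ)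
    (Pxz : Matrix (Fin n) (Fin m) ℝ) (hPxz : Pxz = Xbar * Zbarᵀ)
    (K : Matrix (Fin n) (Fin m) ℝ) (hK : K = Pxz * Re⁻¹) :
    (P - K * Re * Kᵀ).PosSemidef := by
  haveI : Invertible Re := hRepd.isUnit.invertible
  have hReSym : Reᵀ = Re := by
    rw [← conjTranspose_eq_transpose_of_trivial]; exact hRepd.isHermitian.eq
  have hReT : Re⁻¹ᵀ = Re⁻¹ := by rw [transpose_nonsing_inv, hReSym]
  have hKRK : K * Re * Kᵀ = Pxz * Re⁻¹ * Pxzᵀ := by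
    rw [hK, transpose_mul, hReT, Matrix.mul_assoc, Matrix.mul_assoc,
      ← Matrix.mul_assoc Re, mul_inv_of_invertible, Matrix.one_mul, ← Matrix.mul_assoc]
  rw [hKRK, show Pxzᵀ = Pxzᴴ from (conjTranspose_eq_transpose_of_trivial Pxz).symm,
    ← Matrix.PosDef.fromBlocks₂₂ P Pxz hRepd]
  have hblock : fromBlocks P Pxz Pxzᴴ Re =
      fromRows Xbar Zbar * (fromRows Xbar Zbar)ᴴ + fromBlocks 0 0 0 R := by
    rw [conjTranspose_eq_transpose_of_trivial (fromRows Xbar Zbar), transpose_fromRows,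
      fromRows_mul_fromCols, hP, hPxz, hRe,
      conjTranspose_eq_transpose_of_trivial (Xbar * Zbarᵀ), transpose_mul,
      transpose_transpose]
    ext (i|i) (j|j) <;> simp [fromBlocks]
  rw [hblock]
  refine PosSemidef.add (posSemidef_self_mul_conjTranspose _) ?_
  refine PosSemidef.of_dotProduct_mulVec_nonneg ?_ ?_
  · rw [IsHermitian, conjTranspose_eq_transpose_of_trivial]
    ext (i|i) (j|j) <;> simp [fromBlocks] <;> exact hR.isHermitian.apply i j
  · intro x
    have h := (posSemidef_iff_dotProduct_mulVec.mp hR).2 (x ∘ Sum.inr)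
    simpa [dotProduct, mulVec, fromBlocks, Fintype.sum_sum_type] using h
end
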